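/- Let K be a field, R = K[y], σ an endomorphism of R, δ a σ-derivation, S = R[x; σ, δ]. If a ∈ K[y] \ K, and σ(y) has degree > 1 in y, then C_S(a) = K[y]. -/

import Mathlib

open Polynomial

/-- Data exhibiting a ring `S` as the Ore extension `R[x; σ, δ]` of `R = K[y]`:
there is an embedding `ι : K[y] →+* S`, an element `x : S` with
`x · ι r = ι (σ r) · x + ι (δ r)`, `δ` is a `σ`-derivation, and every element
of `S` is uniquely a sum `Σᵢ ι aᵢ · xⁱ`; the unique representation is recorded
by the additive equivalence `rep : S ≃+ (K[y])[x]`. -/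
structure OreExt (K : Type*) [Field K] (S : Type*) [Ring S]
    (σ : Polynomial K →+* Polynomial K) (δ : Polynomial K → Polynomial K) where
  ι : Polynomial K →+* S
  x : S
  rep : S ≃+ Polynomial (Polynomial K)
  rep_symm_apply : ∀ p : Polynomial (Polynomial K),
    rep.symm p = p.sum fun i a => ι a * x ^ i
  comm_rule : ∀ r : Polynomial K, x * ι r = ι (σ r) * x + ι (δ r)
  delta_add : ∀ f g : Polynomial K, δ (f + g) = δ f + δ g
  delta_leibniz : ∀ f g : Polynomial K, δ (f * g) = σ f * δ g + δ f * g

lemma sigma_natDegree {K : Type*} [Field K] (σ : Polynomial K →+* Polynomial K) (q : Polynomial K) :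
    (σ q).natDegree = q.natDegree * (σ X).natDegree := by
  have hC : ∀ c : K, ∃ r : K, σ (C c) = C r := by
    intro c
    rcases eq_or_ne c 0 with rfl | hc
    · exact ⟨0, by simp⟩
    · have : IsUnit (σ (C c)) := (isUnit_C.mpr (isUnit_iff_ne_zero.mpr hc)).map σ
      obtain ⟨r, -, hr⟩ := Polynomial.isUnit_iff.mp this
      exact ⟨r, hr.symm⟩
  choose τ hτ using hC
  have hCinj : Function.Injective (C : K → Polynomial K) := C_injective
  have τhom : ∃ f : K →+* K, ∀ c, τ c = f c := by
    refine ⟨⟨⟨⟨τ, ?_⟩, ?_⟩, ?_, ?_⟩, fun c => rfl⟩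
    · apply hCinj; rw [← hτ, map_one, map_one]
    · intro a b; apply hCinj; rw [← hτ, map_mul, map_mul, map_mul, hτ, hτ]
    · apply hCinj; rw [← hτ, map_zero, map_zero]
    · intro a b; apply hCinj; rw [← hτ, map_add, map_add, map_add, hτ, hτ]
  obtain ⟨f, hf⟩ := τhom
  have key : σ q = (q.map f).comp (σ X) := by
    have : σ = (eval₂RingHom (C.comp f) (σ X)) := by
      apply Polynomial.ringHom_ext
      · intro a
        simp [eval₂RingHom, hτ a, hf]
      · simp [eval₂RingHom]
    conv_lhs => rw [this]
    simp only [coe_eval₂RingHom, Polynomial.comp]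
    rw [Polynomial.eval₂_map]
  rw [key, natDegree_comp, natDegree_map_eq_of_injective f.injective]

namespace OreExt
variable {K S : Type*} [Field K] [Ring S]
  {σ : Polynomial K →+* Polynomial K} {δ : Polynomial K → Polynomial K}

lemma delta_zero (O : OreExt K S σ δ) : δ 0 = (0 : Polynomial K) := by
  have := O.delta_add 0 0
  simpa using this.symm

lemma rep_symm_monomial (O : OreExt K S σ δ) (i : ℕ) (a : Polynomial K) :
    O.rep.symm (monomial i a) = O.ι a * O.x ^ i := by
  rw [O.rep_symm_apply, sum_monomial_index]
  simp

lemma rep_symm_C_mul (O : OreExt K S σ δ) (a : Polynomial K) (q : Polynomial (Polynomial K)) :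
    O.rep.symm (C a * q) = O.ι a * O.rep.symm q := by
  induction q using Polynomial.induction_on' with
  | add q r hq hr => rw [mul_add, map_add, hq, hr, map_add, mul_add]
  | monomial i b =>
      rw [C_mul_monomial, rep_symm_monomial, rep_symm_monomial, map_mul, mul_assoc]

/-- The map on representations corresponding to left multiplication by `x`. -/
noncomputable def psiStep (σ : Polynomial K →+* Polynomial K) (δ : Polynomial K → Polynomial K)
    (q : Polynomial (Polynomial K)) : Polynomial (Polynomial K) :=
  X * q.map σ + q.sum fun i a => monomial i (δ a)

lemma x_mul_rep_symm (O : OreExt K S σ δ) (q : Polynomial (Polynomial K)) :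
    O.x * O.rep.symm q = O.rep.symm (psiStep σ δ q) := by
  induction q using Polynomial.induction_on' with
  | add q r hq hr =>
      have hsum : ((q + r).sum fun i a => monomial i (δ a))
          = (q.sum fun i a => monomial i (δ a)) + r.sum fun i a => monomial i (δ a) :=
        sum_add_index q r _ (fun i => by rw [O.delta_zero]; simp)
          (fun i a b => by rw [O.delta_add]; simp [map_add])
      rw [map_add, mul_add, hq, hr, psiStep, psiStep, psiStep, Polynomial.map_add,
        hsum, mul_add]
      have hre : X * map σ q + X * map σ r
            + ((q.sum fun i a => monomial i (δ a)) + r.sum fun i a => monomial i (δ a))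
          = (X * map σ q + q.sum fun i a => monomial i (δ a))
            + (X * map σ r + r.sum fun i a => monomial i (δ a)) := by ring
      rw [hre]
      simp only [map_add]
  | monomial i b =>
      rw [rep_symm_monomial, psiStep]
      rw [sum_monomial_index _ _ (by rw [O.delta_zero]; simp)]
      rw [Polynomial.map_monomial, X_mul_monomial, map_add, rep_symm_monomial,
        rep_symm_monomial, ← mul_assoc, O.comm_rule, add_mul, mul_assoc, ← pow_succ']

/-- `ψ i` represents `x^i * ι p`. -/
noncomputable def psi (σ : Polynomial K →+* Polynomial K) (δ : Polynomial K → Polynomial K)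
    (p : Polynomial K) (i : ℕ) : Polynomial (Polynomial K) :=
  (psiStep σ δ)^[i] (C p)

lemma x_pow_mul (O : OreExt K S σ δ) (p : Polynomial K) (i : ℕ) :
    O.x ^ i * O.ι p = O.rep.symm (psi σ δ p i) := by
  induction i with
  | zero => simp [psi, ← monomial_zero_left, rep_symm_monomial]
  | succ i ih =>
      rw [psi, Function.iterate_succ_apply', ← x_mul_rep_symm, ← psi, ← ih,
        pow_succ', mul_assoc]

lemma coeff_delta_sum (O : OreExt K S σ δ) (q : Polynomial (Polynomial K)) (j : ℕ) :
    (q.sum fun i a => monomial i (δ a)).coeff j = δ (q.coeff j) := by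
  induction q using Polynomial.induction_on' with
  | add q r hq hr =>
      rw [sum_add_index q r _ (fun i => by rw [O.delta_zero]; simp)
        (fun i a b => by rw [O.delta_add]; simp [map_add]),
        coeff_add, hq, hr, coeff_add, O.delta_add]
  | monomial i b =>
      rw [sum_monomial_index _ _ (by rw [O.delta_zero]; simp), coeff_monomial,
        coeff_monomial]
      split
      · rfl
      · rw [O.delta_zero]

lemma psi_natDegree_coeff (O : OreExt K S σ δ) (p : Polynomial K) (i : ℕ) :
    (psi σ δ p i).natDegree ≤ i ∧ (psi σ δ p i).coeff i = (⇑σ)^[i] p := by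
  induction i with
  | zero => simp [psi]
  | succ i ih =>
      obtain ⟨hd, hc⟩ := ih
      have hstep : psi σ δ p (i + 1) = psiStep σ δ (psi σ δ p i) := by
        rw [psi, Function.iterate_succ_apply', psi]
      constructor
      · rw [hstep, psiStep]
        refine le_trans (natDegree_add_le _ _) (max_le ?_ ?_)
        · refine le_trans natDegree_mul_le ?_
          have h1 : (map σ (psi σ δ p i)).natDegree ≤ i :=
            le_trans natDegree_map_le hd
          rw [natDegree_X]
          omega
        · refine le_trans ?_ (Nat.le_succ i)
          rw [natDegree_le_iff_coeff_eq_zero]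
          intro N hN
          rw [O.coeff_delta_sum, coeff_eq_zero_of_natDegree_lt (lt_of_le_of_lt hd hN),
            O.delta_zero]
      · rw [hstep, psiStep, coeff_add, coeff_X_mul, coeff_map, hc,
          O.coeff_delta_sum, coeff_eq_zero_of_natDegree_lt (lt_of_le_of_lt hd (Nat.lt_succ_self i)),
          O.delta_zero, add_zero, Function.iterate_succ_apply']

lemma rep_symm_mul_right (O : OreExt K S σ δ) (p : Polynomial K)
    (q : Polynomial (Polynomial K)) :
    O.rep.symm q * O.ι p = O.rep.symm (q.sum fun i a => C a * psi σ δ p i) := by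
  induction q using Polynomial.induction_on' with
  | add q r hq hr =>
      rw [map_add, add_mul, hq, hr,
        sum_add_index q r _ (fun i => by simp) (fun i a b => by simp [add_mul]),
        map_add]
  | monomial i b =>
      rw [sum_monomial_index _ _ (by simp), rep_symm_C_mul, rep_symm_monomial,
        ← x_pow_mul, mul_assoc]

end OreExt


theorem stmt17 {K S : Type*} [Field K] [Ring S]
    (σ : Polynomial K →+* Polynomial K) (δ : Polynomial K → Polynomial K)
    (O : OreExt K S σ δ)
    (hs : 1 < (σ Polynomial.X).natDegree)
    (p : Polynomial K) (hp : 0 < p.natDegree) :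
    {b : S | b * O.ι p = O.ι p * b} = Set.range O.ι := by
  ext b
  simp only [Set.mem_setOf_eq, Set.mem_range]
  constructor
  · intro h
    set P : Polynomial (Polynomial K) := O.rep b with hP
    have hb : b = O.rep.symm P := (O.rep.symm_apply_apply b).symm
    set n := P.natDegree with hn
    have hkey : (P.sum fun i a => Polynomial.C a * OreExt.psi σ δ p i) = Polynomial.C p * P := by
      apply O.rep.symm.injective
      rw [← O.rep_symm_mul_right, O.rep_symm_C_mul, ← hb, h]
    have hn0 : n = 0 := by
      by_contra hn0
      have hPne : P ≠ 0 := fun h0 => hn0 (by rw [hn, h0, natDegree_zero])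
      have hmem : n ∈ P.support := by
        rw [mem_support_iff]
        exact leadingCoeff_ne_zero.mpr hPne
      have hcoeff := congrArg (fun q => Polynomial.coeff q n) hkey
      rw [coeff_C_mul] at hcoeff
      rw [Polynomial.sum_def, finset_sum_coeff] at hcoeff
      rw [Finset.sum_eq_single_of_mem n hmem (fun i hi hne => by
        rw [coeff_C_mul, coeff_eq_zero_of_natDegree_lt
          (lt_of_le_of_lt (O.psi_natDegree_coeff p i).1
            (lt_of_le_of_ne (le_natDegree_of_mem_supp i hi) hne)), mul_zero])] at hcoeff
      rw [coeff_C_mul, (O.psi_natDegree_coeff p n).2] at hcoeff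
      -- degree count
      have hdeg : ∀ m, ((⇑σ)^[m] p).natDegree = (σ X).natDegree ^ m * p.natDegree := by
        intro m
        induction m with
        | zero => simp
        | succ m ih =>
            rw [Function.iterate_succ_apply', sigma_natDegree, ih, pow_succ]
            ring
      have han : P.coeff n ≠ 0 := mem_support_iff.mp hmem
      have hσn : ((⇑σ)^[n] p) ≠ 0 := by
        intro h0
        have := hdeg n
        rw [h0, natDegree_zero] at this
        have hpow : 0 < (σ X).natDegree ^ n := pow_pos (by omega) n
        exact absurd this.symm (by positivity)
      have hdegs := congrArg Polynomial.natDegree hcoeff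
      rw [natDegree_mul han hσn, natDegree_mul (fun h0 => absurd h0 (by
        intro hcon; exact (fun hh : p = 0 => by simp [hh] at hp) hcon)) han,
        hdeg n] at hdegs
      have : (σ X).natDegree ^ n * p.natDegree = p.natDegree := by omega
      have h1 : (σ X).natDegree ^ n = 1 := by
        have h2 : (σ X).natDegree ^ n * p.natDegree = 1 * p.natDegree := by omega
        exact Nat.eq_of_mul_eq_mul_right hp h2
      have : (σ X).natDegree ^ n ≥ (σ X).natDegree ^ 1 :=
        Nat.pow_le_pow_right (by omega) (by omega)
      simp at this
      omega
    refine ⟨P.coeff 0, ?_⟩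
    rw [hb, Polynomial.eq_C_of_natDegree_eq_zero hn0, ← monomial_zero_left,
      O.rep_symm_monomial, pow_zero, mul_one]
    simp
  · rintro ⟨a, rfl⟩
    rw [← map_mul, ← map_mul, mul_comm]
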